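/- Fix integers n ≥ 1 and k ≥ 1, and let V_1, …, V_n : ℂⁿ → ℂ be polynomial functions of degree at most k. Let Ω = {x ∈ ℂⁿ : x_1 ≠ 0} and define the holomorphic map Φ : Ω × ℂ → ℂⁿ × ℂ by Φ(x,t) = ((1/x_1, x_2/x_1, …, x_n/x_1), x_1^k t). Then there exists a polynomial map W : ℂⁿ × ℂ → ℂⁿ × ℂ (each component a polynomial in the n+1 complex variables) such that: (i) for every (x,t) ∈ Ω × ℂ, the Fréchet derivative of Φ at (x,t) applied to the vector V(x,t) = (t V_1(x), …, t V_n(x), 0) equals W(Φ(x,t)); and (ii) W(x', t') = 0 whenever x'_1 = 0 or t' = 0. -/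

import Mathlib

/-- The projective coordinate change on the affine chart `{x : xₗ ≠ 0}`. -/
noncomputable def projCoordChange (n : ℕ) [NeZero n] (x : Fin n → ℂ) : Fin n → ℂ :=
  fun i => if i = 0 then (x 0)⁻¹ else x i / x 0

/-- The coordinate change combined with the line bundle transition `t ↦ x₁ᵏ t`. -/
noncomputable def lineBundleChange (n k : ℕ) [NeZero n] (p : (Fin n → ℂ) × ℂ) :
    (Fin n → ℂ) × ℂ :=
  (projCoordChange n p.1, (p.1 0) ^ k * p.2)

open MvPolynomial in
noncomputable def homogAux (n k : ℕ) [NeZero n] (p : MvPolynomial (Fin n) ℂ) :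
    MvPolynomial (Fin n) ℂ :=
  ∑ α ∈ p.support, monomial (Finsupp.update α 0 (k - α.sum fun _ e => e)) (p.coeff α)

open MvPolynomial Finset in
lemma aux_monomial (n k : ℕ) [NeZero n] (x : Fin n → ℂ) (hx : x 0 ≠ 0)
    (d : Fin n →₀ ℕ) (hd : (d.sum fun _ e => e) ≤ k) (c : ℂ) :
    (x 0)^k * eval (projCoordChange n x)
      (monomial (Finsupp.update d 0 (k - d.sum fun _ e => e)) c)
      = eval x (monomial d c) := by
  rw [eval_monomial, eval_monomial,
    Finsupp.prod_fintype _ _ (fun i => pow_zero _),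
    Finsupp.prod_fintype _ _ (fun i => pow_zero _)]
  set S := d.sum fun _ e => e with hSdef
  have hSuniv : S = ∑ i, d i := Finsupp.sum_fintype _ _ (fun i => rfl)
  rw [← Finset.mul_prod_erase Finset.univ _ (Finset.mem_univ (0 : Fin n)),
      ← Finset.mul_prod_erase Finset.univ (fun i => x i ^ d i) (Finset.mem_univ (0 : Fin n))]
  have h0 : (Finsupp.update d 0 (k - S)) 0 = k - S := by simp
  have hco : projCoordChange n x 0 = (x 0)⁻¹ := by simp [projCoordChange]
  have hterm : ∀ i ∈ Finset.univ.erase (0 : Fin n),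
      projCoordChange n x i ^ (Finsupp.update d 0 (k - S)) i = x i ^ d i / x 0 ^ d i := by
    intro i hi
    have hi0 : i ≠ 0 := Finset.mem_erase.1 hi |>.1
    simp [Finsupp.coe_update, Function.update, hi0, projCoordChange, div_pow]
  rw [Finset.prod_congr rfl hterm, Finset.prod_div_distrib, Finset.prod_pow_eq_pow_sum]
  set T := ∑ i ∈ Finset.univ.erase (0 : Fin n), d i with hT
  have hST : S = d 0 + T := by
    rw [hSuniv, ← Finset.add_sum_erase Finset.univ _ (Finset.mem_univ (0 : Fin n))]
  have hkeq : k = (k - S) + T + d 0 := by omega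
  rw [h0, hco]
  rw [hkeq, pow_add, pow_add]
  field_simp
  rw [show k - S + T + d 0 - S = k - S from by omega]
  have h1 : x 0 ^ (k - S) * (x 0)⁻¹ ^ (k - S) = 1 := by
    rw [inv_pow]; exact mul_inv_cancel₀ (pow_ne_zero _ hx)
  ring_nf
  rw [mul_right_comm (x 0 ^ (k - S)) c, h1, one_mul]

open MvPolynomial in
lemma homogAux_eval (n k : ℕ) [NeZero n] (p : MvPolynomial (Fin n) ℂ)
    (hdeg : p.totalDegree ≤ k) (x : Fin n → ℂ) (hx : x 0 ≠ 0) :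
    (x 0)^k * eval (projCoordChange n x) (homogAux n k p) = eval x p := by
  rw [homogAux, map_sum, Finset.mul_sum]
  conv_rhs => rw [← p.support_sum_monomial_coeff, map_sum]
  exact Finset.sum_congr rfl fun d hd =>
    aux_monomial n k x hx d (le_trans (le_totalDegree hd) hdeg) _

/-- Chart-level content of Lemma 2.2, case `m = 1`: the vector field
`V(x,t) = ∑ᵢ t Vᵢ(x) ∂ₓᵢ`, pushed forward by the coordinate change
`Φ(x,t) = ((1/x₁, x₂/x₁, …, xₙ/x₁), x₁ᵏ t)`, extends to a polynomial vector field `W`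
on `ℂⁿ × ℂ` vanishing on `{x'₁ = 0}` and on `{t' = 0}`. -/
theorem extends_to_polynomial_field_rank_one (n k : ℕ) [NeZero n] (hk : 1 ≤ k)
    (V : Fin n → (Fin n → ℂ) → ℂ)
    (hV : ∀ i, ∃ p : MvPolynomial (Fin n) ℂ,
      p.totalDegree ≤ k ∧ ∀ x, V i x = MvPolynomial.eval x p) :
    ∃ W : (Fin n → ℂ) × ℂ → (Fin n → ℂ) × ℂ,
      (∃ Q : Fin n → MvPolynomial (Fin (n + 1)) ℂ, ∃ Qt : MvPolynomial (Fin (n + 1)) ℂ,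
        ∀ p : (Fin n → ℂ) × ℂ,
          W p = (fun i => MvPolynomial.eval (Fin.snoc p.1 p.2) (Q i),
                 MvPolynomial.eval (Fin.snoc p.1 p.2) Qt)) ∧
      (∀ (x : Fin n → ℂ) (t : ℂ), x 0 ≠ 0 →
        fderiv ℂ (lineBundleChange n k) (x, t) ((fun i => t * V i x), (0 : ℂ)) =
          W (lineBundleChange n k (x, t))) ∧
      (∀ (x' : Fin n → ℂ) (t' : ℂ), x' 0 = 0 ∨ t' = 0 → W (x', t') = 0) := by
    classical
  obtain ⟨m, rfl⟩ : ∃ m, k = m + 1 := ⟨k - 1, by omega⟩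
  choose p hdeg hev using hV
  set P : Fin n → MvPolynomial (Fin n) ℂ := fun j => homogAux n (m+1) (p j) with hPdef
  refine ⟨fun q => (fun i => if i = 0
        then -(q.2 * (q.1 0)^2 * MvPolynomial.eval q.1 (P 0))
        else q.2 * q.1 0 * (MvPolynomial.eval q.1 (P i) - q.1 i * MvPolynomial.eval q.1 (P 0)),
      ((m:ℂ)+1) * q.2^2 * q.1 0 * MvPolynomial.eval q.1 (P 0)), ?_, ?_, ?_⟩
  · -- polynomial representation
    refine ⟨fun i => if i = 0
        then -(MvPolynomial.X (Fin.last n) * (MvPolynomial.X (Fin.castSucc 0))^2 *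
          MvPolynomial.rename Fin.castSucc (P 0))
        else MvPolynomial.X (Fin.last n) * MvPolynomial.X (Fin.castSucc 0) *
          (MvPolynomial.rename Fin.castSucc (P i) -
            MvPolynomial.X (Fin.castSucc i) * MvPolynomial.rename Fin.castSucc (P 0)),
      MvPolynomial.C ((m:ℂ)+1) * (MvPolynomial.X (Fin.last n))^2 *
        MvPolynomial.X (Fin.castSucc 0) * MvPolynomial.rename Fin.castSucc (P 0), ?_⟩
    intro q
    have hcomp : (Fin.snoc q.1 q.2 : Fin (n+1) → ℂ) ∘ Fin.castSucc = q.1 := by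
      funext i; simp
    have h00 : (Fin.snoc q.1 q.2 : Fin (n+1) → ℂ) 0 = q.1 0 := by
      have h0c : Fin.castSucc (0 : Fin n) = (0 : Fin (n+1)) := by ext; simp
      rw [← h0c, Fin.snoc_castSucc]
    refine Prod.ext ?_ ?_
    · funext i
      by_cases hi : i = 0 <;>
        simp [hi, MvPolynomial.eval_rename, hcomp, h00]
    · simp [MvPolynomial.eval_rename, hcomp, h00]
  · -- fderiv computation
    intro x t hx
    have hE : ∀ j, (x 0)^(m+1) * MvPolynomial.eval (projCoordChange n x) (P j) = V j x :=
      fun j => by rw [homogAux_eval n (m+1) (p j) (hdeg j) x hx, ← hev j]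
    set D0 : ((Fin n → ℂ) × ℂ) →L[ℂ] ℂ :=
      (ContinuousLinearMap.proj 0).comp (ContinuousLinearMap.fst ℂ (Fin n → ℂ) ℂ) with hD0def
    set Dt : ((Fin n → ℂ) × ℂ) →L[ℂ] ℂ := ContinuousLinearMap.snd ℂ (Fin n → ℂ) ℂ with hDtdef
    have hD0 : HasFDerivAt (fun q : (Fin n → ℂ) × ℂ => q.1 0) D0 (x, t) := D0.hasFDerivAt
    have hinv : HasFDerivAt (fun q : (Fin n → ℂ) × ℂ => (q.1 0)⁻¹)
        ((-((x 0)^2)⁻¹) • D0) (x, t) :=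
      (hasDerivAt_inv hx).comp_hasFDerivAt (x, t) hD0
    set L : Fin n → ((Fin n → ℂ) × ℂ) →L[ℂ] ℂ := fun i => if i = 0
        then (-((x 0)^2)⁻¹) • D0
        else (x i) • ((-((x 0)^2)⁻¹) • D0) + (x 0)⁻¹ •
          ((ContinuousLinearMap.proj i).comp (ContinuousLinearMap.fst ℂ (Fin n → ℂ) ℂ)) with hLdef
    set Lt : ((Fin n → ℂ) × ℂ) →L[ℂ] ℂ :=
      ((x 0)^(m+1)) • Dt + t • ((((m:ℂ)+1) * (x 0)^m) • D0) with hLtdef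
    have hpi : HasFDerivAt (fun q : (Fin n → ℂ) × ℂ => projCoordChange n q.1)
        (ContinuousLinearMap.pi L) (x, t) := by
      apply hasFDerivAt_pi.2
      intro i
      by_cases hi : i = 0
      · subst hi
        have : (fun q : (Fin n → ℂ) × ℂ => projCoordChange n q.1 0) =
            fun q => (q.1 0)⁻¹ := by
          funext q; simp [projCoordChange]
        rw [hLdef]; simpa [this] using hinv
      · have hfun : (fun q : (Fin n → ℂ) × ℂ => projCoordChange n q.1 i) =
            fun q => q.1 i * (q.1 0)⁻¹ := by
          funext q; simp [projCoordChange, hi, div_eq_mul_inv]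
        have hDi : HasFDerivAt (fun q : (Fin n → ℂ) × ℂ => q.1 i)
            ((ContinuousLinearMap.proj i).comp (ContinuousLinearMap.fst ℂ (Fin n → ℂ) ℂ))
            (x, t) :=
          ((ContinuousLinearMap.proj i).comp
            (ContinuousLinearMap.fst ℂ (Fin n → ℂ) ℂ)).hasFDerivAt
        rw [hLdef, hfun]
        simp only [hi, ↓reduceIte]
        exact hDi.mul hinv
    have hpow : HasFDerivAt (fun q : (Fin n → ℂ) × ℂ => (q.1 0)^(m+1))
        ((((m:ℂ)+1) * (x 0)^m) • D0) (x, t) := by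
      have := (hasDerivAt_pow (m+1) (x 0)).comp_hasFDerivAt (x, t) hD0
      simp only [Nat.add_sub_cancel, Nat.cast_add, Nat.cast_one] at this
      exact this
    have hsnd : HasFDerivAt (fun q : (Fin n → ℂ) × ℂ => q.2) Dt (x, t) := Dt.hasFDerivAt
    have hlast : HasFDerivAt (fun q : (Fin n → ℂ) × ℂ => (q.1 0)^(m+1) * q.2) Lt (x, t) :=
      hpow.mul hsnd
    have hΦ : HasFDerivAt (lineBundleChange n (m+1))
        ((ContinuousLinearMap.pi L).prod Lt) (x, t) := hpi.prodMk hlast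
    rw [hΦ.fderiv]
    have hy0 : projCoordChange n x 0 = (x 0)⁻¹ := by simp [projCoordChange]
    refine Prod.ext ?_ ?_
    · funext i
      by_cases hi : i = 0
      · subst hi
        simp only [ContinuousLinearMap.prod_apply, ContinuousLinearMap.pi_apply, hLdef,
          if_pos rfl, ite_true, ContinuousLinearMap.smul_apply, ContinuousLinearMap.comp_apply,
          ContinuousLinearMap.proj_apply, ContinuousLinearMap.coe_fst', hD0def,
          smul_eq_mul, lineBundleChange, hy0]
        rw [← hE 0]
        field_simp
      · have hyi : projCoordChange n x i = x i / x 0 := by simp [projCoordChange, hi]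
        simp only [ContinuousLinearMap.prod_apply, ContinuousLinearMap.pi_apply, hLdef,
          if_neg hi, ite_false, ContinuousLinearMap.add_apply, ContinuousLinearMap.smul_apply,
          ContinuousLinearMap.comp_apply, ContinuousLinearMap.proj_apply,
          ContinuousLinearMap.coe_fst', hD0def, smul_eq_mul, lineBundleChange, hy0, hyi]
        rw [← hE 0, ← hE i]
        field_simp
        ring
    · simp only [ContinuousLinearMap.prod_apply, hLtdef, ContinuousLinearMap.add_apply,
        ContinuousLinearMap.smul_apply, ContinuousLinearMap.comp_apply,
        ContinuousLinearMap.proj_apply, ContinuousLinearMap.coe_fst', hD0def, hDtdef,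
        ContinuousLinearMap.coe_snd', smul_eq_mul, lineBundleChange, hy0]
      rw [← hE 0]
      field_simp
      ring
  · -- vanishing
    rintro x' t' (h | h) <;>
    · refine Prod.ext ?_ ?_
      · funext i
        by_cases hi : i = 0 <;> simp [h, hi]
      · simp [h]
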